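/- Let 1 ≤ p ≤ n, let u^{(1)}, …, u^{(p)} be linearly independent vectors of ℝⁿ satisfying ‖u^{(j)}‖_{ℓ¹} ≤ K for all j ∈ {1,…,p}, and let w be a linear combination of u^{(1)}, …, u^{(p)}. Then there exists j ∈ {1,…,p} such that |u^{(j)} · w| ≥ ‖w‖_{ℓ²} · 𝒱_p(u^{(1)},…,u^{(p)}) / (p K^{p−1}). -/

import Mathlib

open scoped RealInnerProductSpace
open InnerProductSpace
open Matrix in
instance wfltFin (p : ℕ) : WellFoundedLT (Fin p) := inferInstance

section Aux

variable {E : Type*} [NormedAddCommGroup E] [InnerProductSpace ℝ E] {p : ℕ}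

/-- Coefficient matrix expressing `f` in terms of its Gram-Schmidt orthogonalization. -/
noncomputable def gsC (f : Fin p → E) : Matrix (Fin p) (Fin p) ℝ :=
  Matrix.of fun i j =>
    if i = j then 1
    else if i < j then ⟪gramSchmidt ℝ f i, f j⟫ / ‖gramSchmidt ℝ f i‖ ^ 2 else 0

lemma gsC_rep (f : Fin p → E) (j : Fin p) :
    f j = ∑ i, gsC f i j • gramSchmidt ℝ f i := by
  have h0 : ∑ i, gsC f i j • gramSchmidt ℝ f i
      = ∑ i ∈ Finset.Iic j, gsC f i j • gramSchmidt ℝ f i := by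
    refine (Finset.sum_subset (Finset.subset_univ _) ?_).symm
    intro i _ hi
    have h1 : ¬ i ≤ j := by simpa using hi
    have h2 : i ≠ j := fun h => h1 (le_of_eq h)
    have h3 : ¬ i < j := fun h => h1 h.le
    simp [gsC, h2, h3]
  rw [h0, ← Finset.Iio_insert, Finset.sum_insert (by simp)]
  have h4 : gsC f j j = 1 := by simp [gsC]
  rw [h4, one_smul]
  have h5 : ∀ i ∈ Finset.Iio j, gsC f i j • gramSchmidt ℝ f i
      = (⟪gramSchmidt ℝ f i, f j⟫ / ‖gramSchmidt ℝ f i‖ ^ 2) • gramSchmidt ℝ f i := by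
    intro i hi
    have hij : i < j := Finset.mem_Iio.mp hi
    simp [gsC, hij, hij.ne]
  rw [Finset.sum_congr rfl h5]
  exact gramSchmidt_def'' ℝ f j

lemma inner_gs_self (f : Fin p → E) (j : Fin p) :
    ⟪gramSchmidt ℝ f j, f j⟫ = ‖gramSchmidt ℝ f j‖ ^ 2 := by
  conv_lhs => rw [gsC_rep f j]
  rw [inner_sum]
  rw [Finset.sum_eq_single j]
  · rw [real_inner_smul_right, real_inner_self_eq_norm_sq]
    simp [gsC]
  · intro i _ hij
    rw [real_inner_smul_right, gramSchmidt_orthogonal ℝ f (Ne.symm hij), mul_zero]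
  · intro h
    exact absurd (Finset.mem_univ j) h

lemma inner_gs_f (f : Fin p → E) (k j : Fin p) :
    ⟪gramSchmidt ℝ f k, f j⟫ = gsC f k j * ‖gramSchmidt ℝ f k‖ ^ 2 := by
  rcases lt_trichotomy k j with h | h | h
  · by_cases hz : gramSchmidt ℝ f k = 0
    · simp [hz]
    · have hn : ‖gramSchmidt ℝ f k‖ ^ 2 ≠ 0 := by
        simpa using hz
      simp only [gsC, Matrix.of_apply, h.ne, if_false, h, if_true]
      rw [div_mul_cancel₀ _ hn]
  · subst h
    rw [inner_gs_self]
    simp [gsC]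
  · rw [gramSchmidt_inv_triangular ℝ f h]
    simp [gsC, h.ne', not_lt_of_gt h]

lemma norm_gs_le (f : Fin p → E) (j : Fin p) :
    ‖gramSchmidt ℝ f j‖ ≤ ‖f j‖ := by
  have h := inner_gs_self f j
  have h2 := real_inner_le_norm (gramSchmidt ℝ f j) (f j)
  rw [h] at h2
  by_cases hz : ‖gramSchmidt ℝ f j‖ = 0
  · rw [hz]; exact norm_nonneg _
  · have hpos : 0 < ‖gramSchmidt ℝ f j‖ := lt_of_le_of_ne (norm_nonneg _) (Ne.symm hz)
    nlinarith

lemma gram_eq_gsC (f : Fin p → E) :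
    (Matrix.of fun i j : Fin p => ⟪f i, f j⟫)
      = (gsC f).transpose * (Matrix.diagonal fun i => ‖gramSchmidt ℝ f i‖ ^ 2) * gsC f := by
  ext i j
  have lhs : ⟪f i, f j⟫ = ∑ k, gsC f k i * (gsC f k j * ‖gramSchmidt ℝ f k‖ ^ 2) := by
    conv_lhs => rw [gsC_rep f i]
    rw [sum_inner]
    refine Finset.sum_congr rfl fun k _ => ?_
    rw [real_inner_smul_left, inner_gs_f]
  simp only [Matrix.of_apply] at lhs ⊢
  rw [lhs, Matrix.mul_apply]
  refine Finset.sum_congr rfl fun k _ => ?_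
  rw [Matrix.mul_diagonal, Matrix.transpose_apply]
  ring

lemma det_gram_eq (f : Fin p → E) :
    (Matrix.of fun i j : Fin p => ⟪f i, f j⟫).det
      = ∏ i, ‖gramSchmidt ℝ f i‖ ^ 2 := by
  have hC : (gsC f).BlockTriangular id := by
    intro i j h
    have h1 : (j : Fin p) < i := h
    simp [gsC, h1.ne', not_lt_of_gt h1]
  have hdetC : (gsC f).det = 1 := by
    rw [Matrix.det_of_upperTriangular hC]
    simp [gsC]
  rw [gram_eq_gsC, Matrix.det_mul, Matrix.det_mul, Matrix.det_transpose, hdetC,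
    Matrix.det_diagonal]
  ring

lemma euclidean_norm_le_l1 {n : ℕ} (x : EuclideanSpace ℝ (Fin n)) :
    ‖x‖ ≤ ∑ i, |x i| := by
  rw [EuclideanSpace.norm_eq]
  have h1 : ∑ i, ‖x i‖ ^ 2 ≤ (∑ i, |x i|) ^ 2 := by
    have h2 : ∀ i ∈ Finset.univ, ‖x i‖ ^ 2 ≤ |x i| * ∑ j, |x j| := by
      intro i _
      rw [Real.norm_eq_abs, sq]
      exact mul_le_mul_of_nonneg_left
        (Finset.single_le_sum (fun j _ => abs_nonneg (x j)) (Finset.mem_univ i))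
        (abs_nonneg _)
    calc ∑ i, ‖x i‖ ^ 2 ≤ ∑ i, |x i| * ∑ j, |x j| := Finset.sum_le_sum h2
      _ = (∑ i, |x i|) ^ 2 := by rw [← Finset.sum_mul, sq]
  calc Real.sqrt (∑ i, ‖x i‖ ^ 2) ≤ Real.sqrt ((∑ i, |x i|) ^ 2) := Real.sqrt_le_sqrt h1
    _ = ∑ i, |x i| := Real.sqrt_sq (Finset.sum_nonneg fun i _ => abs_nonneg _)

end Aux

/-- If `u 1, …, u p` are linearly independent vectors of `ℝⁿ` with
`ℓ¹`-norm at most `K`, and `w` is a linear combination of them, then for some `j`,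
`|u j ⬝ w| ≥ ‖w‖₂ · 𝒱_p(u) / (p K^(p-1))`, where `𝒱_p(u)` is the Euclidean volume of the
parallelepiped generated by the `u j`, i.e. the square root of the Gram determinant. -/
theorem stmt_2 (n p : ℕ) (hp : 1 ≤ p) (hpn : p ≤ n)
    (u : Fin p → EuclideanSpace ℝ (Fin n))
    (hu_ind : LinearIndependent ℝ u)
    (K : ℝ) (hK : 0 < K)
    (hu_l1 : ∀ j, ∑ i, |u j i| ≤ K)
    (w : EuclideanSpace ℝ (Fin n))
    (hw : w ∈ Submodule.span ℝ (Set.range u)) :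
    ∃ j : Fin p,
      ‖w‖ * Real.sqrt ((Matrix.of fun i j : Fin p => ⟪u i, u j⟫).det)
          / (p * K ^ (p - 1))
        ≤ |⟪u j, w⟫| := by
  classical
  have hne : Nonempty (Fin p) := ⟨⟨0, hp⟩⟩
  -- the norms of the `u k` are bounded by `K`
  have hunorm : ∀ k, ‖u k‖ ≤ K := fun k => (euclidean_norm_le_l1 (u k)).trans (hu_l1 k)
  -- coefficients of `w`
  obtain ⟨c, hc⟩ := (Submodule.mem_span_range_iff_exists_fun ℝ).mp hw
  set G : Matrix (Fin p) (Fin p) ℝ := Matrix.of fun i j : Fin p => ⟪u i, u j⟫ with hG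
  set D : ℝ := Real.sqrt G.det with hD
  have hDnonneg : 0 ≤ D := Real.sqrt_nonneg _
  -- key coefficient bound
  have key : ∀ j : Fin p, |c j| * D ≤ ‖w‖ * K ^ (p - 1) := by
    intro j
    -- move `j` to the top position
    set t : Fin p := ⟨p - 1, by omega⟩ with ht
    have htop : ∀ k : Fin p, k ≤ t := fun k => by
      simp only [ht, Fin.le_def]; omega
    set τ : Equiv.Perm (Fin p) := Equiv.swap j t with hτ
    set f : Fin p → EuclideanSpace ℝ (Fin n) := u ∘ τ with hf
    have hf_ind : LinearIndependent ℝ f := hu_ind.comp τ τ.injective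
    set g : Fin p → EuclideanSpace ℝ (Fin n) := gramSchmidt ℝ f with hg
    -- determinant via Gram–Schmidt of the permuted family
    have hdet : G.det = ∏ i, ‖g i‖ ^ 2 := by
      have h1 : (Matrix.of fun i j : Fin p => ⟪f i, f j⟫) = G.submatrix τ τ := by
        ext i j; simp [hf, hG]
      have h2 := det_gram_eq f
      rw [h1, Matrix.det_submatrix_equiv_self] at h2
      rw [h2, hg]
    have hDprod : D = ∏ i, ‖g i‖ := by
      rw [hD, hdet, Finset.prod_pow, Real.sqrt_sq (Finset.prod_nonneg fun i _ => norm_nonneg _)]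
    -- `g t` is nonzero
    have hgt_ne : g t ≠ 0 := gramSchmidt_ne_zero t hf_ind
    have hgt_pos : 0 < ‖g t‖ := norm_pos_iff.mpr hgt_ne
    -- `g t` is orthogonal to `u i` for `i ≠ j`
    have horth : ∀ i : Fin p, i ≠ j → ⟪g t, u i⟫ = 0 := by
      intro i hij
      have h1 : u i = f (τ i) := by
        simp [hf, hτ, Function.comp]
      have h2 : τ i ≠ t := by
        intro h
        apply hij
        have := congrArg τ h
        simpa [hτ, Equiv.swap_apply_right] using this
      have h3 : τ i < t := lt_of_le_of_ne (htop _) h2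
      rw [h1]
      exact gramSchmidt_inv_triangular ℝ f h3
    have hujt : u j = f t := by
      simp [hf, hτ, Equiv.swap_apply_right]
    -- inner product of `g t` with `w`
    have hinner : ⟪g t, w⟫ = c j * ‖g t‖ ^ 2 := by
      rw [← hc, inner_sum]
      rw [Finset.sum_eq_single j]
      · rw [real_inner_smul_right, hujt, hg, inner_gs_self]
      · intro i _ hij
        rw [real_inner_smul_right, horth i hij, mul_zero]
      · intro h; exact absurd (Finset.mem_univ j) h
    -- bound on the coefficient
    have hcj : |c j| * ‖g t‖ ≤ ‖w‖ := by
      have h1 : |⟪g t, w⟫| ≤ ‖g t‖ * ‖w‖ := abs_real_inner_le_norm _ _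
      rw [hinner, abs_mul, abs_of_nonneg (sq_nonneg ‖g t‖ : (0:ℝ) ≤ ‖g t‖ ^ 2)] at h1
      have h2 : |c j| * ‖g t‖ * ‖g t‖ ≤ ‖w‖ * ‖g t‖ := by nlinarith
      exact le_of_mul_le_mul_right h2 hgt_pos
    -- bound on the remaining product
    have hprod : ∏ i ∈ Finset.univ.erase t, ‖g i‖ ≤ K ^ (p - 1) := by
      have hcard : (Finset.univ.erase t).card = p - 1 := by
        rw [Finset.card_erase_of_mem (Finset.mem_univ t), Finset.card_univ, Fintype.card_fin]
      calc ∏ i ∈ Finset.univ.erase t, ‖g i‖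
          ≤ ∏ _i ∈ Finset.univ.erase t, K := by
            refine Finset.prod_le_prod (fun i _ => norm_nonneg _) (fun i _ => ?_)
            exact (norm_gs_le f i).trans (hunorm (τ i))
        _ = K ^ (p - 1) := by rw [Finset.prod_const, hcard]
    have hDle : D ≤ ‖g t‖ * K ^ (p - 1) := by
      rw [hDprod, ← Finset.prod_erase_mul _ _ (Finset.mem_univ t)]
      rw [mul_comm]
      exact mul_le_mul_of_nonneg_left hprod (norm_nonneg _)
    calc |c j| * D ≤ |c j| * (‖g t‖ * K ^ (p - 1)) :=
          mul_le_mul_of_nonneg_left hDle (abs_nonneg _)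
      _ = (|c j| * ‖g t‖) * K ^ (p - 1) := by ring
      _ ≤ ‖w‖ * K ^ (p - 1) :=
          mul_le_mul_of_nonneg_right hcj (le_of_lt (pow_pos hK _))
  -- choose the maximizing index
  obtain ⟨j₀, _, hj₀⟩ := Finset.exists_max_image Finset.univ (fun j => |⟪u j, w⟫|)
    ⟨⟨0, hp⟩, Finset.mem_univ _⟩
  refine ⟨j₀, ?_⟩
  set M : ℝ := |⟪u j₀, w⟫| with hM
  have hMnonneg : 0 ≤ M := abs_nonneg _
  have hPpos : (0:ℝ) < p * K ^ (p - 1) := by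
    have : (0:ℝ) < p := by exact_mod_cast hp
    exact mul_pos this (pow_pos hK _)
  rw [div_le_iff₀ hPpos]
  by_cases hw0 : w = 0
  · simp [hw0, hMnonneg, mul_nonneg, hPpos.le, mul_nonneg hMnonneg hPpos.le]
  · have hwpos : 0 < ‖w‖ := norm_pos_iff.mpr hw0
    have hww : ‖w‖ ^ 2 = ∑ j, c j * ⟪u j, w⟫ := by
      rw [← real_inner_self_eq_norm_sq]
      nth_rewrite 1 [← hc]
      rw [sum_inner]
      exact Finset.sum_congr rfl fun j _ => real_inner_smul_left _ _ _
    have hmain : ‖w‖ ^ 2 * D ≤ ↑p * (‖w‖ * K ^ (p - 1) * M) := by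
      rw [hww, Finset.sum_mul]
      calc ∑ j, c j * ⟪u j, w⟫ * D
          ≤ ∑ _j : Fin p, ‖w‖ * K ^ (p - 1) * M := by
            refine Finset.sum_le_sum fun j _ => ?_
            calc c j * ⟪u j, w⟫ * D ≤ |c j * ⟪u j, w⟫ * D| := le_abs_self _
              _ = (|c j| * D) * |⟪u j, w⟫| := by
                  rw [abs_mul, abs_mul, abs_of_nonneg hDnonneg]; ring
              _ ≤ (‖w‖ * K ^ (p - 1)) * M := by
                  refine mul_le_mul (key j) (hj₀ j (Finset.mem_univ j)) (abs_nonneg _) ?_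
                  exact mul_nonneg (norm_nonneg _) (le_of_lt (pow_pos hK _))
        _ = ↑p * (‖w‖ * K ^ (p - 1) * M) := by
            rw [Finset.sum_const, Finset.card_univ, Fintype.card_fin, nsmul_eq_mul]
    have h2 : ‖w‖ * D * ‖w‖ ≤ M * (↑p * K ^ (p - 1)) * ‖w‖ := by
      calc ‖w‖ * D * ‖w‖ = ‖w‖ ^ 2 * D := by ring
        _ ≤ ↑p * (‖w‖ * K ^ (p - 1) * M) := hmain
        _ = M * (↑p * K ^ (p - 1)) * ‖w‖ := by ring
    exact le_of_mul_le_mul_right h2 hwpos
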